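/- arXiv:1403.3998 — 3 statements merged into one kernel-verified Lean document; each statement's English description precedes it below -/
import Mathlib

section
/- Let Q and P be positive integers with P ≤ Q, and let y : Fin Q → ℝ satisfy 0 ≤ y q ≤ 1 for all q and ∑ q, y q ≥ P. Then at least P of the entries of y are greater than or equal to 1/(Q - P + 1); that is, the cardinality of {q : y q ≥ 1/(Q - P + 1)} is at least P. -/
theorem stmt_0 (Q P : ℕ) (hQ : 0 < Q) (hP : 0 < P) (hPQ : P ≤ Q)
    (y : Fin Q → ℝ) (hy : ∀ q, 0 ≤ y q ∧ y q ≤ 1)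
    (hsum : (P : ℝ) ≤ ∑ q, y q) :
    P ≤ (Finset.univ.filter (fun q => 1 / ((Q : ℝ) - P + 1) ≤ y q)).card := by
  by_contra h
  push_neg at h
  set t : ℝ := 1 / ((Q : ℝ) - P + 1) with ht
  have hden : (0:ℝ) < (Q : ℝ) - P + 1 := by
    have : (P:ℝ) ≤ (Q:ℝ) := by exact_mod_cast hPQ
    linarith
  have htpos : 0 < t := by positivity
  have htmul : t * ((Q : ℝ) - P + 1) = 1 := by
    rw [ht]; field_simp
  set S := Finset.univ.filter (fun q => t ≤ y q) with hS
  set C := Finset.univ.filter (fun q => ¬ t ≤ y q) with hC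
  have hcards : S.card + C.card = Q := by
    rw [hS, hC, Finset.card_filter_add_card_filter_not]
    simp
  have hcard : (S.card : ℝ) ≤ (P:ℝ) - 1 := by
    have : S.card + 1 ≤ P := h
    have := (Nat.cast_le (α := ℝ)).2 this
    push_cast at this
    linarith
  have hCne : C.Nonempty := by
    rw [← Finset.card_pos]
    omega
  have hsumS : ∑ q ∈ S, y q ≤ (S.card : ℝ) := by
    have := Finset.sum_le_card_nsmul S y 1 (fun q _ => (hy q).2)
    simpa using this
  have hsumC : ∑ q ∈ C, y q < (C.card : ℝ) * t := by
    have h1 : ∑ q ∈ C, y q < ∑ q ∈ C, t := by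
      apply Finset.sum_lt_sum_of_nonempty hCne
      intro q hq
      rw [hC, Finset.mem_filter] at hq
      exact lt_of_not_ge hq.2
    simpa [Finset.sum_const, nsmul_eq_mul] using h1
  have hsplit : ∑ q, y q = ∑ q ∈ S, y q + ∑ q ∈ C, y q := by
    rw [hS, hC]
    exact (Finset.sum_filter_add_sum_filter_not _ _ _).symm
  have hQcast : (S.card : ℝ) + (C.card : ℝ) = (Q : ℝ) := by
    exact_mod_cast congrArg (Nat.cast (R := ℝ)) hcards
  have ht1 : t ≤ 1 := by
    rw [ht]
    rw [div_le_one hden]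
    have : (P:ℝ) ≤ (Q:ℝ) := by exact_mod_cast hPQ
    linarith
  nlinarith [hsumS, hsumC, hsplit, hsum, hQcast, htmul, hcard, htpos, ht1]
end

section
/- Let ξ₁, ξ₂ ∈ ℂ^N, let I ⊆ {1,…,M} with I and its complement nonempty, let H_i = h_i h_iᴴ, and suppose (ξ₁ᴴ H_i ξ₁).re ≥ 1/α for all i ∈ I and (ξ₂ᴴ H_i ξ₂).re ≥ 1/α for all i ∉ I, where α > 0. Suppose also ‖ξ₁‖² + ‖ξ₂‖² ≤ 3 s for some s ≥ 0. Define t₁² = max_{i∈I} 1/(ξ₁ᴴ H_i ξ₁).re, t₂² = max_{i∉I} 1/(ξ₂ᴴ H_i ξ₂).re, and x₁ = t₁ ξ₁, x₂ = t₂ ξ₂. Then x₁, x₂ together with β_i = 1 for i ∈ I and β_i = 0 otherwise are feasible for (P1), and ‖x₁‖² + ‖x₂‖² ≤ 3 α s. -/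
set_option maxHeartbeats 800000


open Matrix ComplexOrder

lemma form_eq_aux (N : ℕ) (h ξ : Fin N → ℂ) :
    (star ξ ⬝ᵥ (Matrix.vecMulVec h (star h)).mulVec ξ).re = ‖star h ⬝ᵥ ξ‖^2 := by
  have key : star ξ ⬝ᵥ (Matrix.vecMulVec h (star h)).mulVec ξ
      = star (star h ⬝ᵥ ξ) * (star h ⬝ᵥ ξ) := by
    simp only [mulVec, dotProduct, vecMulVec_apply, Pi.star_apply, Finset.mul_sum,
      Finset.sum_mul, star_sum, star_mul', RCLike.star_def, Complex.conj_conj]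
    rw [Finset.sum_comm]
    exact Finset.sum_congr rfl fun j _ => Finset.sum_congr rfl fun i _ => by ring
  rw [key, Complex.star_def, ← Complex.normSq_eq_conj_mul_self, Complex.ofReal_re,
    Complex.normSq_eq_norm_sq]

lemma scale_dot (N : ℕ) (h ξ : Fin N → ℂ) (t : ℝ) :
    ‖star h ⬝ᵥ ((t : ℂ) • ξ)‖^2 = t^2 * ‖star h ⬝ᵥ ξ‖^2 := by
  rw [dotProduct_smul]
  simp [norm_smul, mul_pow, sq_abs]

theorem stmt_16 (N M : ℕ)
    (h : Fin M → Fin N → ℂ)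
    (H : Fin M → Matrix (Fin N) (Fin N) ℂ)
    (hH : ∀ i, H i = Matrix.vecMulVec (h i) (star (h i)))
    (ξ₁ ξ₂ : Fin N → ℂ) (I : Finset (Fin M))
    (hI : I.Nonempty) (hIc : Iᶜ.Nonempty)
    (α s : ℝ) (hα : 0 < α) (hs : 0 ≤ s)
    (h1 : ∀ i ∈ I, 1 / α ≤ (star ξ₁ ⬝ᵥ (H i).mulVec ξ₁).re)
    (h2 : ∀ i ∉ I, 1 / α ≤ (star ξ₂ ⬝ᵥ (H i).mulVec ξ₂).re)
    (hnorm : (∑ j, ‖ξ₁ j‖ ^ 2) + (∑ j, ‖ξ₂ j‖ ^ 2) ≤ 3 * s)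
    (t₁ t₂ : ℝ)
    (ht₁ : t₁ = Real.sqrt (I.sup' hI fun i => 1 / (star ξ₁ ⬝ᵥ (H i).mulVec ξ₁).re))
    (ht₂ : t₂ = Real.sqrt (Iᶜ.sup' hIc fun i => 1 / (star ξ₂ ⬝ᵥ (H i).mulVec ξ₂).re))
    (x₁ x₂ : Fin N → ℂ)
    (hx₁ : x₁ = (t₁ : ℂ) • ξ₁) (hx₂ : x₂ = (t₂ : ℂ) • ξ₂) :
    (∀ i, (if i ∈ I then (1 : ℝ) else 0) ≤ (star x₁ ⬝ᵥ (H i).mulVec x₁).re) ∧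
    (∀ i, 1 - (if i ∈ I then (1 : ℝ) else 0) ≤ (star x₂ ⬝ᵥ (H i).mulVec x₂).re) ∧
    (∑ j, ‖x₁ j‖ ^ 2) + (∑ j, ‖x₂ j‖ ^ 2) ≤ 3 * α * s := by
  set Q₁ : Fin M → ℝ := fun i => ‖star (h i) ⬝ᵥ ξ₁‖^2 with hQ₁
  set Q₂ : Fin M → ℝ := fun i => ‖star (h i) ⬝ᵥ ξ₂‖^2 with hQ₂
  have hform1 : ∀ i, (star ξ₁ ⬝ᵥ (H i).mulVec ξ₁).re = Q₁ i := fun i => by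
    rw [hH i]; exact form_eq_aux N (h i) ξ₁
  have hform2 : ∀ i, (star ξ₂ ⬝ᵥ (H i).mulVec ξ₂).re = Q₂ i := fun i => by
    rw [hH i]; exact form_eq_aux N (h i) ξ₂
  have hQ1pos : ∀ i ∈ I, 0 < Q₁ i := fun i hi =>
    lt_of_lt_of_le (by positivity) ((hform1 i) ▸ h1 i hi)
  have hQ2pos : ∀ i ∉ I, 0 < Q₂ i := fun i hi =>
    lt_of_lt_of_le (by positivity) ((hform2 i) ▸ h2 i hi)
  -- sup bounds
  have hsup1_nonneg : 0 ≤ I.sup' hI fun i => 1 / (star ξ₁ ⬝ᵥ (H i).mulVec ξ₁).re := by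
    obtain ⟨i, hi⟩ := hI
    exact le_trans (by rw [hform1]; positivity) (Finset.le_sup' _ hi)
  have hsup2_nonneg : 0 ≤ Iᶜ.sup' hIc fun i => 1 / (star ξ₂ ⬝ᵥ (H i).mulVec ξ₂).re := by
    obtain ⟨i, hi⟩ := hIc
    exact le_trans (by rw [hform2]; positivity) (Finset.le_sup' _ hi)
  have ht₁sq : t₁^2 = I.sup' hI fun i => 1 / (star ξ₁ ⬝ᵥ (H i).mulVec ξ₁).re := by
    rw [ht₁, Real.sq_sqrt hsup1_nonneg]
  have ht₂sq : t₂^2 = Iᶜ.sup' hIc fun i => 1 / (star ξ₂ ⬝ᵥ (H i).mulVec ξ₂).re := by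
    rw [ht₂, Real.sq_sqrt hsup2_nonneg]
  have ht₁α : t₁^2 ≤ α := by
    rw [ht₁sq]
    apply Finset.sup'_le
    intro i hi
    rw [hform1]
    rw [div_le_iff₀ (hQ1pos i hi)]
    calc 1 = α * (1/α) := by field_simp
    _ ≤ α * Q₁ i := by
        apply mul_le_mul_of_nonneg_left _ hα.le
        rw [← hform1]; exact h1 i hi
  have ht₂α : t₂^2 ≤ α := by
    rw [ht₂sq]
    apply Finset.sup'_le
    intro i hi
    rw [Finset.mem_compl] at hi
    rw [hform2]
    rw [div_le_iff₀ (hQ2pos i hi)]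
    calc 1 = α * (1/α) := by field_simp
    _ ≤ α * Q₂ i := by
        apply mul_le_mul_of_nonneg_left _ hα.le
        rw [← hform2]; exact h2 i hi
  have hformx1 : ∀ i, (star x₁ ⬝ᵥ (H i).mulVec x₁).re = t₁^2 * Q₁ i := fun i => by
    rw [hH i, hx₁, form_eq_aux, scale_dot]
  have hformx2 : ∀ i, (star x₂ ⬝ᵥ (H i).mulVec x₂).re = t₂^2 * Q₂ i := fun i => by
    rw [hH i, hx₂, form_eq_aux, scale_dot]
  refine ⟨?_, ?_, ?_⟩
  · intro i
    rw [hformx1]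
    by_cases hi : i ∈ I
    · simp only [hi, if_true]
      have h1' : 1 / Q₁ i ≤ t₁^2 := by
        rw [ht₁sq]
        exact le_trans (le_of_eq (by rw [hform1])) (Finset.le_sup' _ hi)
      calc (1:ℝ) = (1 / Q₁ i) * Q₁ i := by field_simp [(hQ1pos i hi).ne']
      _ ≤ t₁^2 * Q₁ i := mul_le_mul_of_nonneg_right h1' (hQ1pos i hi).le
    · simp only [hi, if_false]
      positivity
  · intro i
    rw [hformx2]
    by_cases hi : i ∈ I
    · simp only [hi, if_true]
      have : (0:ℝ) ≤ t₂^2 * Q₂ i := by positivity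
      linarith
    · simp only [hi, if_false]
      have h2' : 1 / Q₂ i ≤ t₂^2 := by
        rw [ht₂sq]
        exact le_trans (le_of_eq (by rw [hform2]))
          (Finset.le_sup' _ (Finset.mem_compl.mpr hi))
      calc (1:ℝ) - 0 = (1 / Q₂ i) * Q₂ i := by field_simp [(hQ2pos i hi).ne']; norm_num
      _ ≤ t₂^2 * Q₂ i := mul_le_mul_of_nonneg_right h2' (hQ2pos i hi).le
  · have e1 : (∑ j, ‖x₁ j‖ ^ 2) = t₁^2 * ∑ j, ‖ξ₁ j‖ ^ 2 := by
      rw [hx₁, Finset.mul_sum]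
      exact Finset.sum_congr rfl fun j _ => by
        simp [norm_smul, mul_pow, sq_abs]
    have e2 : (∑ j, ‖x₂ j‖ ^ 2) = t₂^2 * ∑ j, ‖ξ₂ j‖ ^ 2 := by
      rw [hx₂, Finset.mul_sum]
      exact Finset.sum_congr rfl fun j _ => by
        simp [norm_smul, mul_pow, sq_abs]
    have p1 : (0:ℝ) ≤ ∑ j, ‖ξ₁ j‖ ^ 2 := by positivity
    have p2 : (0:ℝ) ≤ ∑ j, ‖ξ₂ j‖ ^ 2 := by positivity
    calc (∑ j, ‖x₁ j‖ ^ 2) + (∑ j, ‖x₂ j‖ ^ 2)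
        ≤ α * (∑ j, ‖ξ₁ j‖ ^ 2) + α * (∑ j, ‖ξ₂ j‖ ^ 2) := by
          rw [e1, e2]
          exact add_le_add (mul_le_mul_of_nonneg_right ht₁α p1)
            (mul_le_mul_of_nonneg_right ht₂α p2)
    _ = α * ((∑ j, ‖ξ₁ j‖ ^ 2) + (∑ j, ‖ξ₂ j‖ ^ 2)) := by ring
    _ ≤ α * (3 * s) := mul_le_mul_of_nonneg_left hnorm hα.le
    _ = 3 * α * s := by ring
end

section
/- Let Q, P be integers with 1 ≤ P ≤ Q, let y : Fin Q → ℝ with 0 ≤ y q ≤ 1 and ∑ q, y q ≥ P, and let 𝒫 ⊆ Fin Q be any set of P indices on which y attains its P largest values (i.e., |𝒫| = P and y q ≥ y q' for all q ∈ 𝒫, q' ∉ 𝒫). Then y q ≥ 1/(Q - P + 1) for every q ∈ 𝒫. -/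
theorem stmt_18 (Q P : ℕ) (hP : 1 ≤ P) (hPQ : P ≤ Q)
    (y : Fin Q → ℝ) (hy : ∀ q, 0 ≤ y q ∧ y q ≤ 1)
    (hsum : (P : ℝ) ≤ ∑ q, y q)
    (Pset : Finset (Fin Q)) (hcard : Pset.card = P)
    (htop : ∀ q ∈ Pset, ∀ q' ∉ Pset, y q' ≤ y q) :
    ∀ q ∈ Pset, 1 / ((Q : ℝ) - P + 1) ≤ y q := by
  intro q hq
  have hQP : (P : ℝ) ≤ (Q : ℝ) := by exact_mod_cast hPQ
  have hpos : 0 < (Q : ℝ) - P + 1 := by linarith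
  rw [div_le_iff₀ hpos]
  -- split the sum
  have hsplit : ∑ x, y x = ∑ x ∈ Pset, y x + ∑ x ∈ Psetᶜ, y x := by
    rw [Finset.sum_add_sum_compl]
  have h1 : ∑ x ∈ Pset, y x ≤ y q + ((P : ℝ) - 1) := by
    rw [← Finset.sum_erase_add Pset y hq]
    have hle : ∑ x ∈ Pset.erase q, y x ≤ ((Pset.erase q).card : ℝ) * 1 := by
      have := Finset.sum_le_card_nsmul (Pset.erase q) y 1 (fun x _ => (hy x).2)
      simpa [nsmul_eq_mul] using this
    have hcarde : (Pset.erase q).card = P - 1 := by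
      rw [Finset.card_erase_of_mem hq, hcard]
    rw [hcarde] at hle
    have : ((P - 1 : ℕ) : ℝ) = (P : ℝ) - 1 := by
      have := Nat.cast_sub hP (R := ℝ); simpa using this
    rw [this, mul_one] at hle
    linarith
  have h2 : ∑ x ∈ Psetᶜ, y x ≤ ((Q : ℝ) - P) * y q := by
    have hle : ∑ x ∈ Psetᶜ, y x ≤ ((Psetᶜ.card : ℝ)) * y q := by
      have := Finset.sum_le_card_nsmul Psetᶜ y (y q)
        (fun x hx => htop q hq x (Finset.mem_compl.mp hx))
      simpa [nsmul_eq_mul] using this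
    have hcardc : (Psetᶜ.card : ℝ) = (Q : ℝ) - P := by
      rw [Finset.card_compl, hcard]
      simp [Nat.cast_sub hPQ]
    rwa [hcardc] at hle
  have hyq : 0 ≤ y q := (hy q).1
  nlinarith [hsum, hsplit]
end
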